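/- arXiv:1611.06530 — 2 statements merged into one kernel-verified Lean document; each statement's English description precedes it below -/
import Mathlib

section
/- Let a Type-I recurrent unit on input type X, output type Y and state type S with initial state s₀, update F : X → S → S and output G : X → S → Y be given, and fix an element x₀ : X. Define a Type-II recurrent unit on the state type X × S with initial state (x₀, s₀), update f : X → X × S → X × S given by f x (x', s) = (x, F x s), and output g : X × S → Y given by g (x', s) = G x' s. Then for every input sequence x : ℕ → X and every time t ≥ 1, the Type-II state trajectory s̃ satisfies s̃ t = (x t, s t), where s is the Type-I state trajectory of x. -/
/-- The state trajectory of an input sequence `x` under update `F` and initial state `s₀`. -/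
def traj {X S : Type*} (s₀ : S) (F : X → S → S) (x : ℕ → X) : ℕ → S
  | 0 => s₀
  | t + 1 => F (x (t + 1)) (traj s₀ F x t)

/-- For the Type-II unit on state type `X × S` with initial state `(x₀, s₀)` and update
`f x (x', s) = (x, F x s)`, the Type-II state trajectory at each time `t ≥ 1` equals
`(x t, s t)`, where `s` is the Type-I state trajectory of `x`. -/
theorem typeII_state_of_typeI {X Y S : Type*} (s₀ : S) (F : X → S → S)
    (G : X → S → Y) (x₀ : X)
    (f : X → X × S → X × S) (hf : ∀ x p, f x p = (x, F x p.2))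
    (x : ℕ → X) (t : ℕ) (ht : 1 ≤ t) :
    traj (x₀, s₀) f x t = (x t, traj s₀ F x t) := by
  have h2 : ∀ n, (traj (x₀, s₀) f x n).2 = traj s₀ F x n := by
    intro n
    induction n with
    | zero => rfl
    | succ k ih => simp [traj, hf, ih]
  obtain ⟨k, rfl⟩ := Nat.exists_eq_add_of_le ht
  simp only [Nat.add_comm 1 k, traj, hf]
  rw [h2]
end

section
/- Every causal input-output map admits a Type-I state-space representation. Precisely: fix types X and Y with X nonempty, and let J be a map sending each input sequence x : ℕ → X to an output sequence J x : ℕ → Y which is causal, meaning that whenever two input sequences x and x' satisfy x u = x' u for all u with 1 ≤ u ≤ t, then J x t = J x' t. Then there exist an initial state s₀ : List X and functions F : X → List X → List X and G : X → List X → Y such that for every input sequence x : ℕ → X and every t ≥ 1, J x t = G (x t) (s t), where s is the state trajectory of x under F and s₀. -/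
lemma traj_cons_eq {X : Type} (x : ℕ → X) (t : ℕ) :
    traj ([] : List X) (fun a s => a :: s) x t = (List.range t).reverse.map (fun i => x (i + 1)) := by
  induction t with
  | zero => simp [traj]
  | succ n ih =>
    simp [traj, ih, List.range_succ]

/-- Every causal input-output map admits a Type-I state-space representation with
state type `List X`. -/
theorem causal_admits_typeI (X Y : Type) [Nonempty X] (J : (ℕ → X) → (ℕ → Y))
    (hJ : ∀ (x x' : ℕ → X) (t : ℕ),
      (∀ u, 1 ≤ u → u ≤ t → x u = x' u) → J x t = J x' t) :
    ∃ (s₀ : List X) (F : X → List X → List X) (G : X → List X → Y),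
      ∀ (x : ℕ → X) (t : ℕ), 1 ≤ t → J x t = G (x t) (traj s₀ F x t) := by
  refine ⟨[], fun a s => a :: s, fun _ s =>
    J (fun u => s.reverse.getD (u - 1) (Classical.arbitrary X)) s.length, ?_⟩
  intro x t ht
  rw [traj_cons_eq]
  have hlen : ((List.range t).reverse.map (fun i => x (i + 1))).length = t := by simp
  simp only []
  rw [hlen]
  apply hJ
  intro u h1 h2
  have : (((List.range t).reverse.map (fun i => x (i + 1))).reverse)
      = (List.range t).map (fun i => x (i + 1)) := by simp
  rw [this]
  rw [List.getD_eq_getElem?_getD, List.getElem?_map]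
  have hu : u - 1 < t := by omega
  simp [List.getElem?_range hu]
  congr 1
  omega
end
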